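/- Let Ω be the log-potential of the semicircle law and for a constant β > 1/2 consider the equation (log p)/2 + β + Ω(γ) − γ²/2 = 0 in γ > 0. For every integer p ≥ 1 this equation has a unique positive solution γ(p), and as p → ∞, γ(p) = √(log p) + (log log p)/(2√(log p)) + β/√(log p) + o(1/√(log p)). -/

import Mathlib

/-- The log-potential of the semicircle law on `[-2,2]`. -/
noncomputable def semicircleLogPotential (x : ℝ) : ℝ :=
  if |x| ≤ 2 then x ^ 2 / 4 - 1 / 2
  else x ^ 2 / 4 - 1 / 2 -
    (|x| / 4 * Real.sqrt (x ^ 2 - 4) - Real.log (Real.sqrt (x ^ 2 / 4 - 1) + |x| / 2))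

noncomputable def Fsc (x : ℝ) : ℝ := x ^ 2 / 2 - semicircleLogPotential x

lemma Fsc_small {x : ℝ} (h0 : 0 ≤ x) (h2 : x ≤ 2) : Fsc x = x ^ 2 / 4 + 1 / 2 := by
  unfold Fsc semicircleLogPotential
  rw [if_pos (abs_le.2 ⟨by linarith, h2⟩)]
  ring

lemma omega_param {s : ℝ} (hs : 1 ≤ s) :
    semicircleLogPotential (s + 1/s) = Real.log s + 1/(2*s^2) := by
  have hs0 : 0 < s := by linarith
  rcases eq_or_lt_of_le hs with h1 | h1
  · subst h1  -- s = 1? careful direction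
    norm_num [semicircleLogPotential]
  · have hγ : (2:ℝ) < s + 1/s := by
      have : 0 < (s - 1)^2 / s := div_pos (pow_pos (by linarith) 2) hs0
      have h : (s-1)^2 / s = s + 1/s - 2 := by field_simp; ring
      linarith [h ▸ this]
    have habs : |s + 1/s| = s + 1/s := abs_of_pos (by linarith)
    have hsq : (s + 1/s)^2 - 4 = (s - 1/s)^2 := by field_simp; ring
    have hsqrt : Real.sqrt ((s + 1/s)^2 - 4) = s - 1/s := by
      rw [hsq, Real.sqrt_sq]
      have : 1/s ≤ 1 := by rw [div_le_one hs0]; linarith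
      linarith
    have hsq2 : (s + 1/s)^2 / 4 - 1 = ((s - 1/s)/2)^2 := by field_simp; ring
    have hsqrt2 : Real.sqrt ((s + 1/s)^2/4 - 1) = (s - 1/s)/2 := by
      rw [hsq2, Real.sqrt_sq]
      have : 1/s ≤ 1 := by rw [div_le_one hs0]; linarith
      linarith
    unfold semicircleLogPotential
    rw [if_neg (by rw [habs]; linarith), habs, hsqrt, hsqrt2]
    have : (s - 1/s)/2 + (s + 1/s)/2 = s := by ring
    rw [this]
    field_simp
    ring

lemma Fsc_param {s : ℝ} (hs : 1 ≤ s) :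
    Fsc (s + 1/s) = s^2/2 + 1 - Real.log s := by
  have hs0 : 0 < s := by linarith
  unfold Fsc
  rw [omega_param hs]
  field_simp
  ring

lemma hfun_strictMonoOn : StrictMonoOn (fun s : ℝ => s^2/2 + 1 - Real.log s) (Set.Ici 1) := by
  have hderiv : ∀ s ∈ interior (Set.Ici (1:ℝ)), 0 < s - 1/s := by
    rw [interior_Ici]
    intro s hs
    have hs1 : 1 < s := hs
    have : 1/s < 1 := by rw [div_lt_one (by linarith)]; exact hs1
    linarith
  apply strictMonoOn_of_deriv_pos (convex_Ici 1)
  · apply ContinuousOn.sub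
    · fun_prop
    · apply Real.continuousOn_log.mono
      intro x hx
      simp only [Set.mem_compl_iff, Set.mem_singleton_iff]
      intro h; rw [h] at hx; exact absurd hx (by norm_num)
  · intro s hs
    rw [interior_Ici] at hs
    have hs1 : (1:ℝ) < s := hs
    have hd : HasDerivAt (fun s : ℝ => s^2/2 + 1 - Real.log s) (s - 1/s) s := by
      have h1 : HasDerivAt (fun s : ℝ => s^2/2 + 1) s s := by
        simpa using ((hasDerivAt_pow 2 s).div_const 2).add_const 1
      have h2 : HasDerivAt Real.log (1/s) s := by
        simpa [one_div] using Real.hasDerivAt_log (by linarith)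
      exact h1.sub h2
    rw [hd.deriv]
    have : 1/s < 1 := by rw [div_lt_one (by linarith)]; exact hs1
    linarith

noncomputable def smap (γ : ℝ) : ℝ := (γ + Real.sqrt (γ^2 - 4)) / 2

lemma smap_ge_one {γ : ℝ} (h : 2 ≤ γ) : 1 ≤ smap γ := by
  have : 0 ≤ Real.sqrt (γ^2 - 4) := Real.sqrt_nonneg _
  unfold smap; linarith

lemma smap_gt_one {γ : ℝ} (h : 2 < γ) : 1 < smap γ := by
  have : 0 ≤ Real.sqrt (γ^2 - 4) := Real.sqrt_nonneg _
  unfold smap; linarith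

lemma smap_eq (γ : ℝ) (h : 2 ≤ γ) : smap γ + 1 / smap γ = γ := by
  have h4 : 0 ≤ γ^2 - 4 := by nlinarith
  have hsq : Real.sqrt (γ^2-4) ^ 2 = γ^2 - 4 := Real.sq_sqrt h4
  have hpos : 0 < smap γ := by linarith [smap_ge_one h]
  have key : smap γ * (γ - smap γ) = 1 := by
    unfold smap at *; nlinarith
  have : 1 / smap γ = γ - smap γ := by
    field_simp
    linarith [key]
  rw [this]; ring

lemma smap_strictMonoOn : StrictMonoOn smap (Set.Ici 2) := by
  intro a ha b hb hab
  have ha2 : (2:ℝ) ≤ a := ha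
  have hs : Real.sqrt (a^2-4) ≤ Real.sqrt (b^2-4) := by
    apply Real.sqrt_le_sqrt; nlinarith
  unfold smap; linarith

lemma smap_two : smap 2 = 1 := by
  unfold smap; norm_num

lemma Fsc_of_ge_two {γ : ℝ} (h : 2 ≤ γ) :
    Fsc γ = (smap γ)^2/2 + 1 - Real.log (smap γ) := by
  conv_lhs => rw [← smap_eq γ h]
  exact Fsc_param (smap_ge_one h)

lemma Fsc_strictMonoOn : StrictMonoOn Fsc (Set.Ici 0) := by
  intro a ha b hb hab
  have ha0 : (0:ℝ) ≤ a := ha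
  rcases le_or_gt b 2 with hb2 | hb2
  · rw [Fsc_small ha0 (by linarith), Fsc_small (by linarith) hb2]
    nlinarith
  · rcases le_or_gt a 2 with ha2 | ha2
    · have h1 : Fsc a ≤ Fsc 2 := by
        rw [Fsc_small ha0 ha2, Fsc_small (by norm_num) le_rfl]
        nlinarith
      have h2 : Fsc 2 < Fsc b := by
        rw [Fsc_of_ge_two le_rfl, Fsc_of_ge_two hb2.le, smap_two]
        exact hfun_strictMonoOn (by norm_num) (Set.mem_Ici.2 (smap_ge_one hb2.le))
          (smap_gt_one hb2)
      linarith
    · rw [Fsc_of_ge_two ha2.le, Fsc_of_ge_two hb2.le]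
      exact hfun_strictMonoOn (Set.mem_Ici.2 (smap_ge_one ha2.le))
        (Set.mem_Ici.2 (smap_ge_one hb2.le))
        (smap_strictMonoOn (Set.mem_Ici.2 ha2.le) (Set.mem_Ici.2 hb2.le) hab)

lemma Fsc_exists {t : ℝ} (ht : 1/2 < t) : ∃ γ : ℝ, 0 < γ ∧ Fsc γ = t := by
  rcases le_or_gt t (3/2) with ht2 | ht2
  · refine ⟨2 * Real.sqrt (t - 1/2), mul_pos two_pos (Real.sqrt_pos.2 (by linarith)), ?_⟩
    have h1 : Real.sqrt (t-1/2) ≤ 1 := Real.sqrt_le_one.2 (by linarith)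
    have h0 : 0 ≤ Real.sqrt (t-1/2) := Real.sqrt_nonneg _
    rw [Fsc_small (by positivity) (by linarith)]
    have : Real.sqrt (t-1/2) ^ 2 = t - 1/2 := Real.sq_sqrt (by linarith)
    nlinarith
  · set M : ℝ := 2*t + 2 with hM
    have hM1 : (1:ℝ) ≤ M := by linarith
    have hcont : ContinuousOn (fun s : ℝ => s^2/2 + 1 - Real.log s) (Set.Icc 1 M) := by
      apply ContinuousOn.sub
      · fun_prop
      · apply Real.continuousOn_log.mono
        intro x hx
        simp only [Set.mem_compl_iff, Set.mem_singleton_iff]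
        intro h; rw [h] at hx; exact absurd hx.1 (by norm_num)
    have hIVT := intermediate_value_Icc hM1 hcont
    have hmem : t ∈ Set.Icc ((1:ℝ)^2/2 + 1 - Real.log 1) (M^2/2 + 1 - Real.log M) := by
      constructor
      · norm_num [Real.log_one]; linarith
      · have hlog : Real.log M ≤ M - 1 := Real.log_le_sub_one_of_pos (by linarith)
        have : t ≤ M^2/2 + 1 - (M - 1) := by rw [hM]; nlinarith
        linarith
    obtain ⟨s, hsmem, hs⟩ := hIVT hmem
    have hs1 : 1 ≤ s := hsmem.1
    refine ⟨s + 1/s, by positivity, ?_⟩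
    rw [Fsc_param hs1]; exact hs

open Filter Real

lemma T1 (b : ℝ) : Tendsto (fun x : ℝ => (Real.log x / 2 + b)^2 / x) atTop (nhds 0) := by
  have h2 : Tendsto (fun x : ℝ => Real.log x ^ 2 / x) atTop (nhds 0) := by
    simpa using Real.tendsto_pow_log_div_mul_add_atTop 1 0 2 one_ne_zero
  have h1 : Tendsto (fun x : ℝ => Real.log x / x) atTop (nhds 0) := by
    simpa using Real.tendsto_pow_log_div_mul_add_atTop 1 0 1 one_ne_zero
  have h0 : Tendsto (fun x : ℝ => x⁻¹) atTop (nhds (0:ℝ)) := tendsto_inv_atTop_zero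
  have := ((h2.div_const 4).add (h1.const_mul b)).add (h0.const_mul (b^2))
  norm_num at this
  apply this.congr'
  filter_upwards [eventually_ne_atTop (0:ℝ)] with x hx
  field_simp
  ring

lemma T2 (c : ℝ) : Tendsto (fun x : ℝ => Real.sqrt (x + c) / x) atTop (nhds 0) := by
  have h : Tendsto (fun x : ℝ => 1/x + c/x^2) atTop (nhds 0) := by
    have h1 : Tendsto (fun x : ℝ => 1/x) atTop (nhds (0:ℝ)) := by
      simpa [one_div] using (tendsto_inv_atTop_zero : Tendsto (fun x:ℝ => x⁻¹) atTop (nhds 0))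
    have h2 : Tendsto (fun x : ℝ => c/x^2) atTop (nhds (0:ℝ)) := by
      apply Tendsto.div_atTop tendsto_const_nhds
      exact tendsto_pow_atTop (by norm_num) |>.comp tendsto_id |>.congr (fun x => rfl)
    simpa using h1.add h2
  have hs : Tendsto (fun x : ℝ => Real.sqrt (1/x + c/x^2)) atTop (nhds 0) := by
    simpa using h.sqrt
  apply hs.congr'
  filter_upwards [eventually_ge_atTop (max 1 (-c))] with x hx
  have hx1 : (1:ℝ) ≤ x := le_trans (le_max_left _ _) hx
  have hxc : -c ≤ x := le_trans (le_max_right _ _) hx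
  have hx0 : 0 < x := by linarith
  have h1 : 1/x + c/x^2 = (x + c)/x^2 := by field_simp
  rw [h1, Real.sqrt_div' (x+c) (by positivity), Real.sqrt_sq hx0.le]

lemma main_asymp (β : ℝ) (hβ : 0 < β) (γ s L : ℕ → ℝ)
    (hL : Tendsto L atTop atTop)
    (hE : ∀ᶠ p in atTop, 1 < s p ∧ γ p = s p + 1/(s p) ∧
      (s p)^2 = L p + 2*Real.log (s p) + 2*β - 2 ∧ 4 ≤ L p) :
    Tendsto (fun p => (γ p - (Real.sqrt (L p) + Real.log (L p)/(2*Real.sqrt (L p))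
        + β / Real.sqrt (L p))) * Real.sqrt (L p)) atTop (nhds 0) := by
  set A : ℕ → ℝ := fun p => Real.sqrt (L p) + Real.log (L p)/(2*Real.sqrt (L p))
      + β / Real.sqrt (L p) with hA
  -- upper bound for s
  have hs_ub : ∀ᶠ p in atTop, s p ≤ 1 + Real.sqrt (L p + (2*β + 1)) := by
    filter_upwards [hE] with p ⟨h1, h2, h3, h4⟩
    have hlog : Real.log (s p) ≤ s p - 1 := Real.log_le_sub_one_of_pos (by linarith)
    have hsq : (s p - 1)^2 ≤ L p + (2*β + 1) := by nlinarith
    have := Real.le_sqrt_of_sq_le hsq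
    linarith
  -- s^2 / L → 1
  have hu : Tendsto (fun p => (s p)^2 / L p) atTop (nhds 1) := by
    have hlo : Tendsto (fun p => 1 + (2*β - 2) / L p) atTop (nhds 1) := by
      have := (tendsto_const_nhds (x := (2*β-2)) (f := atTop (α := ℕ))).div_atTop hL
      simpa using (tendsto_const_nhds (x := (1:ℝ))).add this
    have hhi : Tendsto (fun p => 1 + ((2*β+2) / L p + 2 * (Real.sqrt (L p + (2*β+1)) / L p)))
        atTop (nhds 1) := by
      have ha := (tendsto_const_nhds (x := (2*β+2)) (f := atTop (α := ℕ))).div_atTop hL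
      have hb := ((T2 (2*β+1)).comp hL).const_mul 2
      simpa using (tendsto_const_nhds (x := (1:ℝ))).add (ha.add hb)
    apply tendsto_of_tendsto_of_tendsto_of_le_of_le' hlo hhi
    · filter_upwards [hE] with p ⟨h1, h2, h3, h4⟩
      have hlogpos : 0 ≤ Real.log (s p) := Real.log_nonneg (by linarith)
      have hL0 : (0:ℝ) < L p := by linarith
      have heq : 1 + (2*β - 2) / L p = (L p + (2*β-2)) / L p := by field_simp
      rw [heq]
      exact (div_le_div_iff_of_pos_right hL0).2 (by linarith)
    · filter_upwards [hE, hs_ub] with p ⟨h1, h2, h3, h4⟩ hub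
      have hL0 : (0:ℝ) < L p := by linarith
      have hsq : Real.sqrt (L p + (2*β+1)) ^ 2 = L p + (2*β+1) :=
        Real.sq_sqrt (by linarith)
      have hs2 : (s p)^2 ≤ (1 + Real.sqrt (L p + (2*β+1)))^2 := by
        apply pow_le_pow_left₀ (by linarith) hub
      have heq : 1 + ((2*β+2) / L p + 2 * (Real.sqrt (L p + (2*β+1)) / L p))
          = (L p + (2*β+2) + 2 * Real.sqrt (L p + (2*β+1))) / L p := by field_simp; ring
      rw [heq]
      apply (div_le_div_iff_of_pos_right hL0).2
      nlinarith [Real.sqrt_nonneg (L p + (2*β+1))]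
  -- 2 log s - log L → 0
  have hlog0 : Tendsto (fun p => 2*Real.log (s p) - Real.log (L p)) atTop (nhds 0) := by
    have hcont : Tendsto (fun p => Real.log ((s p)^2 / L p)) atTop (nhds 0) := by
      have := (Real.continuousAt_log one_ne_zero).tendsto.comp hu
      simpa [Function.comp_def] using this
    apply hcont.congr'
    filter_upwards [hE] with p ⟨h1, h2, h3, h4⟩
    have hs0 : (0:ℝ) < s p := by linarith
    have hL0 : (0:ℝ) < L p := by linarith
    rw [Real.log_div (by positivity) (by positivity), Real.log_pow]
    push_cast; ring
  -- 1/s^2 → 0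
  have hinv : Tendsto (fun p => 1/(s p)^2) atTop (nhds 0) := by
    have hs2 : Tendsto (fun p => (s p)^2) atTop atTop := by
      apply tendsto_atTop_mono' atTop (f₁ := fun p => L p + (2*β - 2))
      · filter_upwards [hE] with p ⟨h1, h2, h3, h4⟩
        have hlogpos : 0 ≤ Real.log (s p) := Real.log_nonneg (by linarith)
        linarith
      · exact tendsto_atTop_add_const_right atTop (2*β-2) hL
    simpa [one_div, Pi.inv_def] using hs2.inv_tendsto_atTop
  have hc : Tendsto (fun p => (Real.log (L p)/2 + β)^2 / L p) atTop (nhds 0) :=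
    (T1 β).comp hL
  have hsum : Tendsto (fun p => (2*Real.log (s p) - Real.log (L p)) + 1/(s p)^2
      - (Real.log (L p)/2 + β)^2 / L p) atTop (nhds 0) := by
    simpa using (hlog0.add hinv).sub hc
  -- γ² - A² → 0
  have key : ∀ r c b : ℝ, r ≠ 0 →
      (r + c/(2*r) + b/r)^2 = r^2 + c + 2*b + (c/2+b)^2/r^2 := by
    intro r c b hr; field_simp; ring
  have hγA : Tendsto (fun p => (γ p)^2 - (A p)^2) atTop (nhds 0) := by
    apply hsum.congr'
    filter_upwards [hE] with p ⟨h1, h2, h3, h4⟩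
    have hs0 : (0:ℝ) < s p := by linarith
    have hL0 : (0:ℝ) < L p := by linarith
    have hr2 : Real.sqrt (L p) ^ 2 = L p := Real.sq_sqrt hL0.le
    have hr0 : Real.sqrt (L p) ≠ 0 := by positivity
    have hA2 : (A p)^2 = L p + Real.log (L p) + 2*β + (Real.log (L p)/2 + β)^2 / L p := by
      rw [hA]
      simp only
      rw [key _ _ _ hr0, hr2]
    have hγ2 : (γ p)^2 = L p + 2*Real.log (s p) + 2*β + 1/(s p)^2 := by
      rw [h2]
      have : (s p + 1/s p)^2 = (s p)^2 + 2 + 1/(s p)^2 := by field_simp; ring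
      rw [this, h3]; ring
    rw [hγ2, hA2]; ring
  -- final squeeze
  apply squeeze_zero_norm' (a := fun p => |(γ p)^2 - (A p)^2|)
  · filter_upwards [hE] with p ⟨h1, h2, h3, h4⟩
    have hL0 : (0:ℝ) < L p := by linarith
    have hr0 : 0 < Real.sqrt (L p) := Real.sqrt_pos.2 hL0
    have hlogL : 0 ≤ Real.log (L p) := Real.log_nonneg (by linarith)
    have hApos : Real.sqrt (L p) ≤ A p := by
      rw [hA]; simp only
      have : 0 ≤ Real.log (L p)/(2*Real.sqrt (L p)) := by positivity
      have : 0 ≤ β / Real.sqrt (L p) := by positivity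
      linarith [div_nonneg hlogL (by positivity : (0:ℝ) ≤ 2*Real.sqrt (L p)),
        div_nonneg hβ.le hr0.le]
    have hγpos : 0 < γ p := by
      rw [h2]; have : 0 < 1/s p := by positivity
      linarith
    have hsum_pos : 0 < γ p + A p := by linarith
    calc ‖(γ p - A p) * Real.sqrt (L p)‖
        = |γ p - A p| * Real.sqrt (L p) := by
          rw [norm_mul, Real.norm_eq_abs, Real.norm_eq_abs, abs_of_pos hr0]
      _ ≤ |γ p - A p| * (γ p + A p) := by
          apply mul_le_mul_of_nonneg_left _ (abs_nonneg _)
          linarith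
      _ = |(γ p - A p) * (γ p + A p)| := by
          rw [abs_mul, abs_of_pos hsum_pos]
      _ = |(γ p)^2 - (A p)^2| := by rw [show (γ p - A p) * (γ p + A p) = (γ p)^2 - (A p)^2 by ring]
  · simpa using hγA.abs

/-- For `β > 1/2`, the equation `(log p)/2 + β + Ω(γ) − γ²/2 = 0` has a unique positive
solution `γ(p)` for every `p ≥ 1`, and
`γ(p) = √(log p) + (log log p)/(2√(log p)) + β/√(log p) + o(1/√(log p))` as `p → ∞`. -/
theorem gamma_unique_and_asymptotics (β : ℝ) (hβ : 1 / 2 < β) :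
    (∀ p : ℕ, 1 ≤ p → ∃! γ : ℝ, 0 < γ ∧
        Real.log p / 2 + β + semicircleLogPotential γ - γ ^ 2 / 2 = 0) ∧
    (∀ γ : ℕ → ℝ,
      (∀ p : ℕ, 1 ≤ p → 0 < γ p ∧
        Real.log p / 2 + β + semicircleLogPotential (γ p) - (γ p) ^ 2 / 2 = 0) →
      Filter.Tendsto (fun p : ℕ =>
          (γ p - Real.sqrt (Real.log p)
            - Real.log (Real.log p) / (2 * Real.sqrt (Real.log p))
            - β / Real.sqrt (Real.log p)) * Real.sqrt (Real.log p))
        Filter.atTop (nhds 0)) := by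
  constructor
  · intro p hp
    have hp1 : (1:ℝ) ≤ (p:ℝ) := by exact_mod_cast hp
    have ht : 1/2 < Real.log p / 2 + β := by
      have : 0 ≤ Real.log p := Real.log_nonneg hp1
      linarith
    obtain ⟨γ0, hγ0pos, hγ0⟩ := Fsc_exists ht
    refine ⟨γ0, ⟨hγ0pos, ?_⟩, ?_⟩
    · unfold Fsc at hγ0; linarith
    · rintro y ⟨hypos, hyeq⟩
      apply Fsc_strictMonoOn.injOn (Set.mem_Ici.2 hypos.le) (Set.mem_Ici.2 hγ0pos.le)
      unfold Fsc at hγ0 ⊢; linarith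
  · intro γ hγ
    set L : ℕ → ℝ := fun p => Real.log p with hLdef
    set s : ℕ → ℝ := fun p => smap (γ p) with hsdef
    have hL : Filter.Tendsto L Filter.atTop Filter.atTop :=
      Real.tendsto_log_atTop.comp tendsto_natCast_atTop_atTop
    have hE : ∀ᶠ p in Filter.atTop, 1 < s p ∧ γ p = s p + 1/(s p) ∧
        (s p)^2 = L p + 2*Real.log (s p) + 2*β - 2 ∧ 4 ≤ L p := by
      filter_upwards [hL.eventually_ge_atTop 4, Filter.eventually_ge_atTop 1] with p h4 hp1
      obtain ⟨hpos, heq⟩ := hγ p hp1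
      have hFsc : Fsc (γ p) = L p / 2 + β := by unfold Fsc; simp only [hLdef]; linarith
      have hγ2 : 2 < γ p := by
        by_contra h
        push_neg at h
        rw [Fsc_small hpos.le h] at hFsc
        nlinarith
      have hs1 : 1 < s p := smap_gt_one hγ2
      have hγeq : γ p = s p + 1/(s p) := (smap_eq (γ p) hγ2.le).symm
      have hFsc2 : Fsc (γ p) = (s p)^2/2 + 1 - Real.log (s p) := Fsc_of_ge_two hγ2.le
      refine ⟨hs1, hγeq, by rw [hFsc2] at hFsc; linarith, h4⟩
    have := main_asymp β (by linarith) γ s L hL hE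
    exact this.congr (fun p => by ring)
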